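/- Let N ≥ 2, κ > 0, α ∈ ℝ, and let V_1,…,V_N : (0,∞) → ℝ be continuous. Suppose for each j there are twice continuously differentiable functions u_j, v_j on [0,∞) satisfying −u_j'' + V_j u_j = −κ² u_j and −v_j'' + V_j v_j = −κ² v_j on (0,∞), with u_j(0) = 0, v_j(0) ≠ 0, v_j ∈ L²((0,∞)), and such that the Wronskian W_j := u_j v_j' − u_j' v_j is a (necessarily constant) nonzero number. Put M := Σ_{j=1}^N v_j'(0)/v_j(0) and assume α − M ≠ 0. Define G_{jℓ}(x,y) := δ_{jℓ}·(−u_j(min(x,y))·v_j(max(x,y))/W_j) + v_j(x)·v_ℓ(y)/(v_j(0)·v_ℓ(0)·(α−M)). Then for any continuous compactly supported f_1,…,f_N : (0,∞) → ℝ, the functions w_j(x) := Σ_{ℓ=1}^N ∫₀^∞ G_{jℓ}(x,y) f_ℓ(y) dy satisfy: (i) w_j is continuously differentiable on [0,∞), twice differentiable on (0,∞), and −w_j''(x) + V_j(x)·w_j(x) + κ²·w_j(x) = f_j(x) for all x > 0; (ii) w_1(0) = ⋯ = w_N(0); (iii) Σ_{j=1}^N w_j'(0) = α·w_1(0); (iv)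 each w_j ∈ L²((0,∞)). (This is the content of the paper's Lemma giving, via Krein's formula, the resolvent kernel of H_α(V) on the star graph at energy k² = −κ².) -/

import Mathlib

open MeasureTheory Set Real

/-- Krein-formula resolvent kernel of `H_α(V)` on the star graph of `N`
half-lines at energy `−κ²`: for each link one is given solutions `u_j`
(vanishing at the vertex) and `v_j` (square-integrable at infinity) of
`−ψ'' + V_jψ = −κ²ψ`, with constant nonzero Wronskian `W_j`; the kernel is
`G_{jℓ}(x,y) = δ_{jℓ}·(−u_j(x∧y)v_j(x∨y)/W_j) + v_j(x)v_ℓ(y)/(v_j(0)v_ℓ(0)(α−M))`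
with `M = Σ_j v_j'(0)/v_j(0)`.  Applied to continuous compactly supported data,
it produces `C¹` functions on `[0,∞)` solving `−w'' + V w + κ²w = f` on `(0,∞)`,
obeying the δ vertex conditions with parameter `α`, and lying in `L²((0,∞))`. -/
theorem starKernel_resolvent
    (N : ℕ) (hN : 2 ≤ N) (κ α : ℝ) (hκ : 0 < κ)
    (V : Fin N → ℝ → ℝ) (hV : ∀ j, ContinuousOn (V j) (Ioi 0))
    (u u' u'' v v' v'' : Fin N → ℝ → ℝ) (W : Fin N → ℝ)
    -- u is C² on [0,∞) with second derivative u''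
    (hu1 : ∀ j, ∀ x ∈ Ici (0:ℝ), HasDerivWithinAt (u j) (u' j x) (Ici 0) x)
    (hu2 : ∀ j, ∀ x ∈ Ici (0:ℝ), HasDerivWithinAt (u' j) (u'' j x) (Ici 0) x)
    (hu3 : ∀ j, ContinuousOn (u'' j) (Ici 0))
    -- v is C² on [0,∞) with second derivative v''
    (hv1 : ∀ j, ∀ x ∈ Ici (0:ℝ), HasDerivWithinAt (v j) (v' j x) (Ici 0) x)
    (hv2 : ∀ j, ∀ x ∈ Ici (0:ℝ), HasDerivWithinAt (v' j) (v'' j x) (Ici 0) x)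
    (hv3 : ∀ j, ContinuousOn (v'' j) (Ici 0))
    -- the differential equations −ψ'' + V_jψ = −κ²ψ on (0,∞)
    (hueq : ∀ j, ∀ x ∈ Ioi (0:ℝ), -(u'' j x) + V j x * u j x = -(κ ^ 2) * u j x)
    (hveq : ∀ j, ∀ x ∈ Ioi (0:ℝ), -(v'' j x) + V j x * v j x = -(κ ^ 2) * v j x)
    -- boundary behavior
    (hu0 : ∀ j, u j 0 = 0) (hv0 : ∀ j, v j 0 ≠ 0)
    (hvL2 : ∀ j, MemLp (v j) 2 (volume.restrict (Ioi 0)))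
    -- constant nonzero Wronskian
    (hW : ∀ j, ∀ x ∈ Ici (0:ℝ), u j x * v' j x - u' j x * v j x = W j)
    (hWne : ∀ j, W j ≠ 0)
    -- α avoids the pole M = Σ_j v_j'(0)/v_j(0)
    (hαM : α - (∑ m, v' m 0 / v m 0) ≠ 0)
    -- data and the resolvent candidate
    (f : Fin N → ℝ → ℝ)
    (hfc : ∀ j, Continuous (f j)) (hfs : ∀ j, HasCompactSupport (f j))
    (hfsupp : ∀ j, tsupport (f j) ⊆ Ioi 0)
    (w : Fin N → ℝ → ℝ)
    (hw : ∀ j x, w j x = ∑ ℓ, ∫ y in Ioi (0:ℝ),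
        ((if j = ℓ then 1 else 0) * (-(u j (min x y) * v j (max x y)) / W j)
          + v j x * v ℓ y / (v j 0 * v ℓ 0 * (α - ∑ m, v' m 0 / v m 0))) * f ℓ y) :
    ∃ w' : Fin N → ℝ → ℝ,
      (∀ j, ∀ x ∈ Ici (0:ℝ), HasDerivWithinAt (w j) (w' j x) (Ici 0) x) ∧
      (∀ j, ContinuousOn (w' j) (Ici 0)) ∧
      (∀ j, ∀ x ∈ Ioi (0:ℝ),
        HasDerivAt (w' j) (V j x * w j x + κ ^ 2 * w j x - f j x) x) ∧
      (∀ j, w j 0 = w ⟨0, by omega⟩ 0) ∧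
      ((∑ j, w' j 0) = α * w ⟨0, by omega⟩ 0) ∧
      (∀ j, MemLp (w j) 2 (volume.restrict (Ioi 0))) := by
  classical
  -- continuity of the data on `[0,∞)`
  have hucont : ∀ j, ContinuousOn (u j) (Ici 0) := fun j x hx => (hu1 j x hx).continuousWithinAt
  have hvcont : ∀ j, ContinuousOn (v j) (Ici 0) := fun j x hx => (hv1 j x hx).continuousWithinAt
  have hu'cont : ∀ j, ContinuousOn (u' j) (Ici 0) := fun j x hx => (hu2 j x hx).continuousWithinAt
  have hv'cont : ∀ j, ContinuousOn (v' j) (Ici 0) := fun j x hx => (hv2 j x hx).continuousWithinAt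
  have hmaxc : Continuous fun y : ℝ => max 0 y := continuous_const.max continuous_id
  have hmaxmem : ∀ y : ℝ, max 0 y ∈ Ici (0:ℝ) := fun y => Set.mem_Ici.mpr (le_max_left _ _)
  -- globally continuous modifications
  set ut : Fin N → ℝ → ℝ := fun j y => u j (max 0 y) with hut_def
  set vt : Fin N → ℝ → ℝ := fun j y => v j (max 0 y) with hvt_def
  set ut' : Fin N → ℝ → ℝ := fun j y => u' j (max 0 y) with hut'_def
  set vt' : Fin N → ℝ → ℝ := fun j y => v' j (max 0 y) with hvt'_def
  have hutc : ∀ j, Continuous (ut j) := fun j => (hucont j).comp_continuous hmaxc hmaxmem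
  have hvtc : ∀ j, Continuous (vt j) := fun j => (hvcont j).comp_continuous hmaxc hmaxmem
  have hut'c : ∀ j, Continuous (ut' j) := fun j => (hu'cont j).comp_continuous hmaxc hmaxmem
  have hvt'c : ∀ j, Continuous (vt' j) := fun j => (hv'cont j).comp_continuous hmaxc hmaxmem
  have hute : ∀ j, ∀ y : ℝ, 0 ≤ y → ut j y = u j y := by
    intro j y hy; simp only [hut_def]; rw [max_eq_right hy]
  have hvte : ∀ j, ∀ y : ℝ, 0 ≤ y → vt j y = v j y := by
    intro j y hy; simp only [hvt_def]; rw [max_eq_right hy]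
  have hut'e : ∀ j, ∀ y : ℝ, 0 ≤ y → ut' j y = u' j y := by
    intro j y hy; simp only [hut'_def]; rw [max_eq_right hy]
  have hvt'e : ∀ j, ∀ y : ℝ, 0 ≤ y → vt' j y = v' j y := by
    intro j y hy; simp only [hvt'_def]; rw [max_eq_right hy]
  set D : ℝ := α - ∑ m, v' m 0 / v m 0 with hD_def
  -- integrability workhorse
  have hInt : ∀ (g : ℝ → ℝ), Continuous g → ∀ ℓ, Integrable (fun y => g y * f ℓ y) :=
    fun g hg ℓ => (hg.mul (hfc ℓ)).integrable_of_hasCompactSupport ((hfs ℓ).mul_left)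
  set T : Fin N → ℝ := fun ℓ => ∫ y in Ioi (0:ℝ), vt ℓ y * f ℓ y with hT_def
  set S : ℝ := ∑ ℓ, T ℓ / v ℓ 0 with hS_def
  set c : Fin N → ℝ := fun j => S / (v j 0 * D) with hc_def
  set F : Fin N → ℝ → ℝ := fun j x => ∫ t in (0:ℝ)..x, ut j t * f j t with hF_def
  set G : Fin N → ℝ → ℝ := fun j x => ∫ t in (0:ℝ)..x, vt j t * f j t with hG_def
  set φ : Fin N → ℝ → ℝ := fun j x =>
    -(1 / W j) * (vt j x * F j x + ut j x * (T j - G j x)) + vt j x * c j with hφ_def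
  clear_value ut vt ut' vt' D T S c F G φ
  -- FTC derivatives
  have hFd : ∀ j x, HasDerivAt (F j) (ut j x * f j x) x := by
    intro j x
    simp only [hF_def]
    exact intervalIntegral.integral_hasDerivAt_right (((hutc j).mul (hfc j)).intervalIntegrable _ _)
      (((hutc j).mul (hfc j)).stronglyMeasurableAtFilter _ _) ((hutc j).mul (hfc j)).continuousAt
  have hGd : ∀ j x, HasDerivAt (G j) (vt j x * f j x) x := by
    intro j x
    simp only [hG_def]
    exact intervalIntegral.integral_hasDerivAt_right (((hvtc j).mul (hfc j)).intervalIntegrable _ _)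
      (((hvtc j).mul (hfc j)).stronglyMeasurableAtFilter _ _) ((hvtc j).mul (hfc j)).continuousAt
  have hFc : ∀ j, Continuous (F j) := fun j => continuous_iff_continuousAt.2 fun x => (hFd j x).continuousAt
  have hGc : ∀ j, Continuous (G j) := fun j => continuous_iff_continuousAt.2 fun x => (hGd j x).continuousAt
  have hFIoc : ∀ j, ∀ x : ℝ, 0 ≤ x → F j x = ∫ y in Ioc (0:ℝ) x, ut j y * f j y := by
    intro j x hx; simp only [hF_def]; exact intervalIntegral.integral_of_le hx
  have hGIoc : ∀ j, ∀ x : ℝ, 0 ≤ x → G j x = ∫ y in Ioc (0:ℝ) x, vt j y * f j y := by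
    intro j x hx; simp only [hG_def]; exact intervalIntegral.integral_of_le hx
  have hTsplit : ∀ j, ∀ x : ℝ, 0 ≤ x →
      T j = (∫ y in Ioc (0:ℝ) x, vt j y * f j y) + ∫ y in Ioi x, vt j y * f j y := by
    intro j x hx
    simp only [hT_def]
    rw [← Ioc_union_Ioi_eq_Ioi hx, setIntegral_union Ioc_disjoint_Ioi_same measurableSet_Ioi
      ((hInt _ (hvtc j) j).integrableOn) ((hInt _ (hvtc j) j).integrableOn)]
  -- the key pointwise identity  w = φ on [0,∞)
  have key : ∀ j, ∀ x : ℝ, 0 ≤ x → w j x = φ j x := by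
    intro j x hx
    have hterm : ∀ ℓ, (∫ y in Ioi (0:ℝ),
        ((if j = ℓ then 1 else 0) * (-(u j (min x y) * v j (max x y)) / W j)
          + v j x * v ℓ y / (v j 0 * v ℓ 0 * D)) * f ℓ y)
        = (if j = ℓ then -(1 / W j) * (vt j x * F j x + ut j x * (T j - G j x)) else 0)
          + vt j x / (v j 0 * D) * (T ℓ / v ℓ 0) := by
      intro ℓ
      by_cases hjl : j = ℓ
      · subst hjl
        have hAcont : Continuous fun y => -(ut j (min x y) * vt j (max x y)) / W j :=
          (((hutc j).comp (continuous_const.min continuous_id)).mul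
            ((hvtc j).comp (continuous_const.max continuous_id))).neg.div_const _
        have hcong : EqOn (fun y => ((if j = j then (1:ℝ) else 0) * (-(u j (min x y) * v j (max x y)) / W j)
              + v j x * v j y / (v j 0 * v j 0 * D)) * f j y)
            (fun y => (-(ut j (min x y) * vt j (max x y)) / W j) * f j y
              + (vt j x / (v j 0 * v j 0 * D)) * (vt j y * f j y)) (Ioi 0) := by
          intro y hy
          have hy0 : (0:ℝ) ≤ y := le_of_lt hy
          simp only [eq_self_iff_true, if_true]
          rw [← hute j (min x y) (le_min hx hy0), ← hvte j (max x y) (le_trans hx (le_max_left x y)),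
            ← hvte j x hx, ← hvte j y hy0]
          ring
        rw [setIntegral_congr_fun measurableSet_Ioi hcong,
          integral_add ((hInt _ hAcont j).integrableOn) (((hInt _ (hvtc j) j).const_mul _).integrableOn),
          integral_const_mul]
        have hAsplit : (∫ y in Ioi (0:ℝ), (-(ut j (min x y) * vt j (max x y)) / W j) * f j y)
            = -(1 / W j) * (vt j x * F j x + ut j x * (T j - G j x)) := by
          rw [← Ioc_union_Ioi_eq_Ioi hx, setIntegral_union Ioc_disjoint_Ioi_same measurableSet_Ioi
            ((hInt _ hAcont j).integrableOn) ((hInt _ hAcont j).integrableOn)]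
          have h1 : EqOn (fun y => (-(ut j (min x y) * vt j (max x y)) / W j) * f j y)
              (fun y => (-(vt j x) / W j) * (ut j y * f j y)) (Ioc 0 x) := by
            intro y hy
            simp only
            rw [min_eq_right hy.2, max_eq_left hy.2]
            ring
          have h2 : EqOn (fun y => (-(ut j (min x y) * vt j (max x y)) / W j) * f j y)
              (fun y => (-(ut j x) / W j) * (vt j y * f j y)) (Ioi x) := by
            intro y hy
            simp only
            rw [min_eq_left (le_of_lt hy), max_eq_right (le_of_lt hy)]
            ring
          rw [setIntegral_congr_fun measurableSet_Ioc h1, setIntegral_congr_fun measurableSet_Ioi h2,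
            integral_const_mul, integral_const_mul]
          have h3 : (∫ y in Ioi x, vt j y * f j y) = T j - G j x := by
            have h4 := hTsplit j x hx
            rw [hGIoc j x hx]
            linarith
          rw [h3, ← hFIoc j x hx]
          ring
        rw [hAsplit, if_pos rfl]
        simp only [hT_def]
        ring
      · have hcong : EqOn (fun y => ((if j = ℓ then (1:ℝ) else 0) * (-(u j (min x y) * v j (max x y)) / W j)
              + v j x * v ℓ y / (v j 0 * v ℓ 0 * D)) * f ℓ y)
            (fun y => (vt j x / (v j 0 * v ℓ 0 * D)) * (vt ℓ y * f ℓ y)) (Ioi 0) := by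
          intro y hy
          simp only [if_neg hjl]
          rw [← hvte j x hx, ← hvte ℓ y (le_of_lt hy)]
          ring
        rw [setIntegral_congr_fun measurableSet_Ioi hcong, integral_const_mul, if_neg hjl]
        simp only [hT_def]
        ring
    rw [hw j x, Finset.sum_congr rfl fun ℓ _ => hterm ℓ, Finset.sum_add_distrib,
      Finset.sum_ite_eq Finset.univ j, ← Finset.mul_sum, ← hS_def]
    simp only [Finset.mem_univ, if_true, hφ_def, hc_def]
    ring
  -- the candidate derivative
  set w'f : Fin N → ℝ → ℝ := fun j x =>
    -(1 / W j) * (vt' j x * F j x + ut' j x * (T j - G j x)) + vt' j x * c j with hw'_def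
  clear_value w'f
  -- value of w at 0
  have hw0 : ∀ i, w i 0 = S / D := by
    intro i
    rw [key i 0 le_rfl]
    have hF0 : F i 0 = 0 := by simp only [hF_def]; exact intervalIntegral.integral_same
    have hG0 : G i 0 = 0 := by simp only [hG_def]; exact intervalIntegral.integral_same
    have hu00 : ut i 0 = 0 := by rw [hute i 0 le_rfl, hu0 i]
    simp only [hφ_def, hF0, hG0, hu00, hc_def, hvte i 0 le_rfl]
    field_simp [hv0 i, hαM]
    try ring
  -- value of w' at 0
  have hw'0 : ∀ j, w'f j 0 = T j / v j 0 + v' j 0 / v j 0 * (S / D) := by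
    intro j
    have e : u' j 0 * v j 0 = -W j := by
      have h5 := hW j 0 Set.self_mem_Ici
      rw [hu0 j] at h5
      linarith
    have hu'00 : u' j 0 = -W j / v j 0 := by
      rw [eq_div_iff (hv0 j)]
      linarith
    have hF0 : F j 0 = 0 := by simp only [hF_def]; exact intervalIntegral.integral_same
    have hG0 : G j 0 = 0 := by simp only [hG_def]; exact intervalIntegral.integral_same
    simp only [hw'_def, hF0, hG0, hc_def, hut'e j 0 le_rfl, hvt'e j 0 le_rfl, hu'00]
    field_simp [hWne j, hv0 j, hαM]
    try ring
  refine ⟨w'f, ?_, ?_, ?_, ?_, ?_, ?_⟩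
  · -- C¹ on [0,∞)
    intro j x hx
    have hvtd : HasDerivWithinAt (vt j) (vt' j x) (Ici 0) x := by
      rw [hvt'e j x hx]
      exact (hv1 j x hx).congr (fun y hy => hvte j y hy) (hvte j x hx)
    have hutd : HasDerivWithinAt (ut j) (ut' j x) (Ici 0) x := by
      rw [hut'e j x hx]
      exact (hu1 j x hx).congr (fun y hy => hute j y hy) (hute j x hx)
    have hd : HasDerivWithinAt (φ j) (w'f j x) (Ici 0) x := by
      simp only [hφ_def]
      have h1 := ((hvtd.mul (hFd j x).hasDerivWithinAt).add
        (hutd.mul (((hasDerivWithinAt_const x (Ici (0:ℝ)) (T j)).sub (hGd j x).hasDerivWithinAt))))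
      have h2 := (HasDerivWithinAt.const_mul (-(1 / W j)) h1).add (hvtd.mul_const (c j))
      refine h2.congr_deriv ?_
      simp only [hw'_def, Pi.sub_apply]
      ring
    exact hd.congr (fun y hy => key j y hy) (key j x hx)
  · -- continuity of the derivative
    intro j
    have hco : Continuous (w'f j) := by
      simp only [hw'_def]
      exact (continuous_const.mul (((hvt'c j).mul (hFc j)).add
        ((hut'c j).mul (continuous_const.sub (hGc j))))).add ((hvt'c j).mul continuous_const)
    exact hco.continuousOn
  · -- second derivative / ODE
    intro j x hx
    have hx0 : (0:ℝ) < x := hx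
    have hnhds : Ici (0:ℝ) ∈ nhds x := Ici_mem_nhds hx0
    have hvt'd : HasDerivAt (vt' j) (v'' j x) x :=
      ((hv2 j x (le_of_lt hx0)).hasDerivAt hnhds).congr_of_eventuallyEq
        (Filter.eventuallyEq_of_mem hnhds fun y hy => hvt'e j y hy)
    have hut'd : HasDerivAt (ut' j) (u'' j x) x :=
      ((hu2 j x (le_of_lt hx0)).hasDerivAt hnhds).congr_of_eventuallyEq
        (Filter.eventuallyEq_of_mem hnhds fun y hy => hut'e j y hy)
    have hraw : HasDerivAt (w'f j)
        (-(1 / W j) * ((v'' j x * F j x + vt' j x * (ut j x * f j x))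
          + (u'' j x * (T j - G j x) + ut' j x * (0 - vt j x * f j x)))
          + v'' j x * c j) x := by
      simp only [hw'_def]
      exact (HasDerivAt.const_mul (-(1 / W j)) ((hvt'd.mul (hFd j x)).add
        (hut'd.mul ((hasDerivAt_const x (T j)).sub (hGd j x))))).add (hvt'd.mul_const (c j))
    have heq : V j x * w j x + κ ^ 2 * w j x - f j x
        = -(1 / W j) * ((v'' j x * F j x + vt' j x * (ut j x * f j x))
          + (u'' j x * (T j - G j x) + ut' j x * (0 - vt j x * f j x)))
          + v'' j x * c j := by
      rw [key j x (le_of_lt hx0)]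
      have e1 : u'' j x = V j x * u j x + κ ^ 2 * u j x := by
        have h6 := hueq j x hx; linarith
      have e2 : v'' j x = V j x * v j x + κ ^ 2 * v j x := by
        have h6 := hveq j x hx; linarith
      have e3 : u j x * v' j x - u' j x * v j x = W j := hW j x (le_of_lt hx0)
      have hne : u j x * v' j x - u' j x * v j x ≠ 0 := by rw [e3]; exact hWne j
      simp only [hφ_def, hute j x (le_of_lt hx0), hvte j x (le_of_lt hx0),
        hut'e j x (le_of_lt hx0), hvt'e j x (le_of_lt hx0)]
      rw [e1, e2, ← e3]
      field_simp
      ring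
    rw [heq]
    exact hraw
  · -- common vertex value
    intro j
    rw [hw0 j, hw0 (⟨0, by omega⟩ : Fin N)]
  · -- δ coupling condition
    have hMs : (∑ m, v' m 0 / v m 0) = α - D := by rw [hD_def]; ring
    rw [hw0 (⟨0, by omega⟩ : Fin N)]
    calc (∑ j, w'f j 0) = ∑ j, (T j / v j 0 + v' j 0 / v j 0 * (S / D)) :=
          Finset.sum_congr rfl fun j _ => hw'0 j
      _ = (∑ j, T j / v j 0) + (∑ j, v' j 0 / v j 0) * (S / D) := by
          rw [Finset.sum_add_distrib, Finset.sum_mul]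
      _ = S + (α - D) * (S / D) := by rw [← hS_def, hMs]
      _ = α * (S / D) := by field_simp; ring
  · -- square integrability
    intro j
    obtain ⟨B, hB⟩ := (hfs j).bddAbove
    set R : ℝ := max B 1 with hR_def
    have hR0 : (0:ℝ) < R := lt_of_lt_of_le one_pos (le_max_right _ _)
    have hfR : ∀ y : ℝ, R < y → f j y = 0 := by
      intro y hy
      apply image_eq_zero_of_notMem_tsupport
      intro hmem
      exact absurd (le_trans (hB hmem) (le_max_left B 1)) (not_le.mpr hy)
    set K : ℝ := ∫ y in Ioi (0:ℝ), ut j y * f j y with hK_def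
    have hFK : ∀ x : ℝ, R ≤ x → F j x = K := by
      intro x hxR
      have hx0 : (0:ℝ) ≤ x := le_trans hR0.le hxR
      have hz : (∫ y in Ioi x, ut j y * f j y) = 0 :=
        setIntegral_eq_zero_of_forall_eq_zero fun y hy => by
          rw [hfR y (lt_of_le_of_lt hxR hy), mul_zero]
      have hsp : K = (∫ y in Ioc (0:ℝ) x, ut j y * f j y) + ∫ y in Ioi x, ut j y * f j y := by
        simp only [hK_def]
        rw [← Ioc_union_Ioi_eq_Ioi hx0, setIntegral_union Ioc_disjoint_Ioi_same measurableSet_Ioi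
          ((hInt _ (hutc j) j).integrableOn) ((hInt _ (hutc j) j).integrableOn)]
      rw [hFIoc j x hx0, hsp, hz, add_zero]
    have hGT : ∀ x : ℝ, R ≤ x → G j x = T j := by
      intro x hxR
      have hx0 : (0:ℝ) ≤ x := le_trans hR0.le hxR
      have hz : (∫ y in Ioi x, vt j y * f j y) = 0 :=
        setIntegral_eq_zero_of_forall_eq_zero fun y hy => by
          rw [hfR y (lt_of_le_of_lt hxR hy), mul_zero]
      have h4 := hTsplit j x hx0
      rw [hz, add_zero] at h4
      rw [hGIoc j x hx0, ← h4]
    set C : ℝ := c j - (1 / W j) * K with hC_def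
    set ψ : ℝ → ℝ := fun x => φ j x - C * vt j x with hψ_def
    have hψc : Continuous ψ := by
      simp only [hψ_def, hφ_def]
      exact ((continuous_const.mul (((hvtc j).mul (hFc j)).add
        ((hutc j).mul (continuous_const.sub (hGc j))))).add
        ((hvtc j).mul continuous_const)).sub (continuous_const.mul (hvtc j))
    have hψ0 : ∀ x : ℝ, R ≤ x → ψ x = 0 := by
      intro x hxR
      simp only [hψ_def, hφ_def, hC_def]
      rw [hFK x hxR, hGT x hxR]
      ring
    have hae : w j =ᵐ[volume.restrict (Ioi 0)] fun x => ψ x + C * v j x := by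
      filter_upwards [ae_restrict_mem measurableSet_Ioi] with x hx
      rw [key j x (le_of_lt hx), ← hvte j x (le_of_lt hx)]
      simp only [hψ_def]
      ring
    have hmem : MemLp (fun x => ψ x + C * v j x) 2 (volume.restrict (Ioi 0)) := by
      apply MemLp.add
      · have hind : (Ioc (0:ℝ) R).indicator ψ =ᵐ[volume.restrict (Ioi 0)] ψ := by
          filter_upwards [ae_restrict_mem measurableSet_Ioi] with x hx
          by_cases hxR : x ≤ R
          · rw [Set.indicator_of_mem (show x ∈ Ioc 0 R from ⟨hx, hxR⟩) ψ]
          · rw [Set.indicator_of_notMem (fun hmem2 => hxR hmem2.2 : x ∉ Ioc 0 R) ψ, hψ0 x (le_of_not_ge hxR)]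
        refine MemLp.ae_eq hind ?_
        refine MemLp.mono_measure Measure.restrict_le_self ?_
        rw [memLp_indicator_iff_restrict measurableSet_Ioc]
        obtain ⟨Cb, hCb⟩ := (isCompact_Icc (a := (0:ℝ)) (b := R)).exists_bound_of_continuousOn
          hψc.continuousOn
        refine MemLp.of_bound hψc.aestronglyMeasurable Cb ?_
        filter_upwards [ae_restrict_mem measurableSet_Ioc] with x hx
        exact hCb x ⟨hx.1.le, hx.2⟩
      · exact (hvL2 j).const_mul C
    exact MemLp.ae_eq hae.symm hmem
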